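/- Let R₀ be a commutative ring and R = R₀[b₁, …, b_n, b′₁, …, b′_n] the polynomial ring over R₀ in 2n variables. Fix 2 ≤ k ≤ n and let J_k ⊆ R be the ideal generated by { r_{ij} = b_i b′_j − b_j b′_i : 1 ≤ i, j ≤ k }. Then J_k is saturated with respect to b′₁: for every x ∈ R and every natural number e, if (b′₁)^e · x ∈ J_k then x ∈ J_k. -/

import Mathlib

open MvPolynomial

namespace Stmt12Aux

variable {R₀ : Type*} [CommRing R₀]

/-- The generators of the ideal of 2×2 minors. -/
def gens (R₀ : Type*) [CommRing R₀] (n k : ℕ) : Set (MvPolynomial (Fin n ⊕ Fin n) R₀) :=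
  {y : MvPolynomial (Fin n ⊕ Fin n) R₀ |
      ∃ i j : Fin n, (i : ℕ) < k ∧ (j : ℕ) < k ∧
        y = X (Sum.inl i) * X (Sum.inr j) - X (Sum.inl j) * X (Sum.inr i)}

/-- The substitution `b_i ↦ u·b′_i` for `i < k`, other variables to themselves
(`u` is the variable `none`). -/
noncomputable def fv (R₀ : Type*) [CommRing R₀] (n k : ℕ) :
    Fin n ⊕ Fin n → MvPolynomial (Option (Fin n ⊕ Fin n)) R₀
  | .inl i => if (i : ℕ) < k then X none * X (some (.inr i)) else X (some (.inl i))
  | .inr j => X (some (.inr j))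

/-- The exponent vector of `fv`. -/
noncomputable def gv (n k : ℕ) : Fin n ⊕ Fin n → (Option (Fin n ⊕ Fin n) →₀ ℕ)
  | .inl i => if (i : ℕ) < k then
      Finsupp.single none 1 + Finsupp.single (some (.inr i)) 1
    else Finsupp.single (some (.inl i)) 1
  | .inr j => Finsupp.single (some (.inr j)) 1

lemma fv_eq_monomial (n k : ℕ) (s : Fin n ⊕ Fin n) :
    (fv R₀ n k s) = monomial (gv n k s) 1 := by
  cases s with
  | inl i =>
      simp only [fv, gv]
      split_ifs with h
      · rw [X, X, monomial_mul, one_mul]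
      · rw [X]
  | inr j => rw [fv, gv, X]

/-- The image exponent vector under the substitution. -/
noncomputable def Dm (n k : ℕ) (d : Fin n ⊕ Fin n →₀ ℕ) : Option (Fin n ⊕ Fin n) →₀ ℕ :=
  d.sum fun s e => e • gv n k s

lemma phi_monomial (n k : ℕ) (d : Fin n ⊕ Fin n →₀ ℕ) (c : R₀) :
    aeval (fv R₀ n k) (monomial d c) = monomial (Dm n k d) c := by
  rw [aeval_monomial]
  have h : (d.prod fun s e => (fv R₀ n k s) ^ e)
      = monomial (Dm n k d) 1 := by
    rw [Finsupp.prod, Dm, Finsupp.sum]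
    induction d.support using Finset.induction_on with
    | empty => simp
    | insert a s hnot ih =>
        rw [Finset.prod_insert hnot, Finset.sum_insert hnot, ih, fv_eq_monomial,
          monomial_pow, monomial_mul, one_pow, one_mul]
  rw [h, algebraMap_eq, C_mul_monomial, mul_one]

lemma Dm_apply (n k : ℕ) (d : Fin n ⊕ Fin n →₀ ℕ) (x : Option (Fin n ⊕ Fin n)) :
    Dm n k d x = (∑ i : Fin n, d (.inl i) * gv n k (.inl i) x)
      + ∑ j : Fin n, d (.inr j) * gv n k (.inr j) x := by
  rw [Dm, Finsupp.sum_apply]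
  rw [Finsupp.sum_fintype _ _ (by intro s; simp)]
  simp only [Finsupp.smul_apply, smul_eq_mul]
  rw [Fintype.sum_sum_type]

lemma Dm_none (n k : ℕ) (d : Fin n ⊕ Fin n →₀ ℕ) :
    Dm n k d none = ∑ i ∈ Finset.univ.filter (fun i : Fin n => (i : ℕ) < k), d (.inl i) := by
  rw [Dm_apply]
  have h2 : ∀ j : Fin n, d (.inr j) * gv n k (.inr j) none = 0 := by
    intro j; simp [gv, Finsupp.single_apply]
  rw [Finset.sum_congr rfl (fun j _ => h2 j), Finset.sum_const_zero, add_zero,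
    Finset.sum_filter]
  refine Finset.sum_congr rfl fun i _ => ?_
  by_cases h : (i : ℕ) < k <;> simp [gv, h, Finsupp.single_apply]

lemma Dm_inl (n k : ℕ) (d : Fin n ⊕ Fin n →₀ ℕ) (i : Fin n) (hi : ¬ (i : ℕ) < k) :
    Dm n k d (some (.inl i)) = d (.inl i) := by
  rw [Dm_apply]
  have h2 : ∀ j : Fin n, d (.inr j) * gv n k (.inr j) (some (.inl i)) = 0 := by
    intro j; simp [gv, Finsupp.single_apply]
  rw [Finset.sum_congr rfl (fun j _ => h2 j), Finset.sum_const_zero, add_zero]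
  rw [Finset.sum_eq_single i]
  · simp [gv, hi, Finsupp.single_apply]
  · intro b _ hb
    by_cases h : (b : ℕ) < k <;> simp [gv, h, Finsupp.single_apply, hb]
  · simp

lemma Dm_inr (n k : ℕ) (d : Fin n ⊕ Fin n →₀ ℕ) (j : Fin n) :
    Dm n k d (some (.inr j)) = (if (j : ℕ) < k then d (.inl j) else 0) + d (.inr j) := by
  rw [Dm_apply]
  congr 1
  · rw [Finset.sum_eq_single j]
    · by_cases h : (j : ℕ) < k <;> simp [gv, h, Finsupp.single_apply]
    · intro b _ hb
      by_cases h : (b : ℕ) < k <;> simp [gv, h, Finsupp.single_apply, hb]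
    · simp
  · rw [Finset.sum_eq_single j]
    · simp [gv, Finsupp.single_apply]
    · intro b _ hb; simp [gv, Finsupp.single_apply, hb]
    · simp

/-- Normal-form exponent vectors: among the first `k` indices, every `b`-index
appearing is at most every `b′`-index appearing. -/
def Normal (n k : ℕ) (d : Fin n ⊕ Fin n →₀ ℕ) : Prop :=
  ∀ i j : Fin n, (i : ℕ) < k → (j : ℕ) < k → d (.inl i) ≠ 0 → d (.inr j) ≠ 0 → i ≤ j

lemma aux1 {n k : ℕ} (d d' : Fin n ⊕ Fin n →₀ ℕ)
    (hγ : ∀ j : Fin n, (j : ℕ) < k →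
      d (.inl j) + d (.inr j) = d' (.inl j) + d' (.inr j))
    (ht : ∑ i ∈ Finset.univ.filter (fun i : Fin n => (i : ℕ) < k), d (.inl i)
        = ∑ i ∈ Finset.univ.filter (fun i : Fin n => (i : ℕ) < k), d' (.inl i))
    (hN : Normal n k d) (j₀ : Fin n) (hj₀ : (j₀ : ℕ) < k)
    (hmin : ∀ j : Fin n, j < j₀ → d (.inl j) = d' (.inl j))
    (hlt : d (.inl j₀) < d' (.inl j₀)) : False := by
  have hex : ∃ i ∈ Finset.univ.filter (fun i : Fin n => (i : ℕ) < k),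
      j₀ < i ∧ d' (.inl i) < d (.inl i) := by
    by_contra h
    push_neg at h
    have hlt' : ∑ i ∈ Finset.univ.filter (fun i : Fin n => (i : ℕ) < k), d (.inl i)
        < ∑ i ∈ Finset.univ.filter (fun i : Fin n => (i : ℕ) < k), d' (.inl i) := by
      refine Finset.sum_lt_sum (fun i hi => ?_) ⟨j₀, by simp [hj₀], hlt⟩
      rcases lt_trichotomy i j₀ with hc | hc | hc
      · exact (hmin i hc).le
      · subst hc; exact hlt.le
      · exact h i hi hc
    omega
  obtain ⟨i, hi, hij, hlt2⟩ := hex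
  have hik : (i : ℕ) < k := by simpa using hi
  have hdi : d (.inl i) ≠ 0 := by omega
  have hrj : d (.inr j₀) ≠ 0 := by have := hγ j₀ hj₀; omega
  exact absurd (hN i j₀ hik hj₀ hdi hrj) (not_le.2 hij)

lemma eq_on_lt {n k : ℕ} (d d' : Fin n ⊕ Fin n →₀ ℕ)
    (hγ : ∀ j : Fin n, (j : ℕ) < k →
      d (.inl j) + d (.inr j) = d' (.inl j) + d' (.inr j))
    (ht : ∑ i ∈ Finset.univ.filter (fun i : Fin n => (i : ℕ) < k), d (.inl i)
        = ∑ i ∈ Finset.univ.filter (fun i : Fin n => (i : ℕ) < k), d' (.inl i))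
    (hN : Normal n k d) (hN' : Normal n k d') :
    ∀ j : Fin n, (j : ℕ) < k → d (.inl j) = d' (.inl j) := by
  by_contra h
  push_neg at h
  obtain ⟨j, hjk, hne⟩ := h
  classical
  set S := Finset.univ.filter
      (fun j : Fin n => (j : ℕ) < k ∧ d (.inl j) ≠ d' (.inl j)) with hS
  have hSne : S.Nonempty := ⟨j, by simp [hS, hjk, hne]⟩
  set j₀ := S.min' hSne with hj₀def
  have hj₀S : j₀ ∈ S := S.min'_mem hSne
  have hj₀k : (j₀ : ℕ) < k := by simpa [hS] using (Finset.mem_filter.1 hj₀S).2.1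
  have hj₀ne : d (.inl j₀) ≠ d' (.inl j₀) := (Finset.mem_filter.1 hj₀S).2.2
  have hmin : ∀ j : Fin n, j < j₀ → d (.inl j) = d' (.inl j) := by
    intro j hj
    by_contra hne'
    by_cases hjk' : (j : ℕ) < k
    · exact absurd (S.min'_le j (by simp [hS, hjk', hne'])) (not_le.2 hj)
    · exact hjk' (by have h1 : (j:ℕ) < (j₀:ℕ) := hj; omega)
  rcases lt_or_gt_of_ne hj₀ne with hc | hc
  · exact aux1 d d' hγ ht hN j₀ hj₀k hmin hc
  · exact aux1 d' d (fun j hj => (hγ j hj).symm) ht.symm hN' j₀ hj₀k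
      (fun j hj => (hmin j hj).symm) hc

lemma Dm_inj {n k : ℕ} (d d' : Fin n ⊕ Fin n →₀ ℕ)
    (hN : Normal n k d) (hN' : Normal n k d') (h : Dm n k d = Dm n k d') : d = d' := by
  have hγ : ∀ j : Fin n, (j : ℕ) < k →
      d (.inl j) + d (.inr j) = d' (.inl j) + d' (.inr j) := by
    intro j hjk
    have := congrArg (fun u : Option (Fin n ⊕ Fin n) →₀ ℕ => u (some (.inr j))) h
    simpa [Dm_inr, hjk] using this
  have ht : ∑ i ∈ Finset.univ.filter (fun i : Fin n => (i : ℕ) < k), d (.inl i)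
      = ∑ i ∈ Finset.univ.filter (fun i : Fin n => (i : ℕ) < k), d' (.inl i) := by
    have := congrArg (fun u : Option (Fin n ⊕ Fin n) →₀ ℕ => u none) h
    simpa [Dm_none] using this
  have hlt := eq_on_lt d d' hγ ht hN hN'
  ext s
  rcases s with i | j
  · by_cases hik : (i : ℕ) < k
    · exact hlt i hik
    · have := congrArg (fun u : Option (Fin n ⊕ Fin n) →₀ ℕ => u (some (.inl i))) h
      simpa [Dm_inl _ _ _ _ hik] using this
  · by_cases hjk : (j : ℕ) < k
    · have h1 := hγ j hjk
      have h2 := hlt j hjk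
      omega
    · have := congrArg (fun u : Option (Fin n ⊕ Fin n) →₀ ℕ => u (some (.inr j))) h
      simpa [Dm_inr, hjk] using this

/-- The weight used for termination of straightening. -/
noncomputable def wgt (n : ℕ) (d : Fin n ⊕ Fin n →₀ ℕ) : ℕ :=
  d.sum fun s e => (Sum.elim (fun i : Fin n => (i : ℕ)) (fun _ => 0) s) * e

lemma wgt_add (n : ℕ) (a b : Fin n ⊕ Fin n →₀ ℕ) : wgt n (a + b) = wgt n a + wgt n b :=
  Finsupp.sum_add_index' (fun _ => by simp) (fun s e₁ e₂ => by rw [Nat.mul_add])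

lemma wgt_single (n : ℕ) (s : Fin n ⊕ Fin n) (e : ℕ) :
    wgt n (Finsupp.single s e) = (Sum.elim (fun i : Fin n => (i : ℕ)) (fun _ => 0) s) * e :=
  Finsupp.sum_single_index (by simp)

/-- The span of the normal monomials, as an `R₀`-submodule. -/
noncomputable def NS (R₀ : Type*) [CommRing R₀] (n k : ℕ) :
    Submodule R₀ (MvPolynomial (Fin n ⊕ Fin n) R₀) :=
  Submodule.span R₀ {p | ∃ d, Normal n k d ∧ p = monomial d 1}

lemma monomial_mem_sup (n k : ℕ) :
    ∀ N : ℕ, ∀ d : Fin n ⊕ Fin n →₀ ℕ, wgt n d < N →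
      monomial d (1 : R₀) ∈
        NS R₀ n k ⊔ (Ideal.span (gens R₀ n k)).restrictScalars R₀ := by
  intro N
  induction N with
  | zero => intro d hd; omega
  | succ N ih =>
      intro d hd
      by_cases hnorm : Normal n k d
      · exact Submodule.mem_sup_left (Submodule.subset_span ⟨d, hnorm, rfl⟩)
      · simp only [Normal, not_forall] at hnorm
        obtain ⟨i, j, hik, hjk, hdi, hdj, hij⟩ := hnorm
        have hji : j < i := not_le.1 hij
        set d₀ := d - Finsupp.single (.inl i) 1 - Finsupp.single (.inr j) 1 with hd₀
        have hsum : d₀ + Finsupp.single (.inl i) 1 + Finsupp.single (.inr j) 1 = d := by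
          ext s
          rcases eq_or_ne s (.inl i) with rfl | hs1
          · have hdi' : 1 ≤ d (.inl i) := Nat.one_le_iff_ne_zero.2 hdi
            simp [hd₀, Finsupp.single_apply]
            omega
          · rcases eq_or_ne s (.inr j) with rfl | hs2
            · have hdj' : 1 ≤ d (.inr j) := Nat.one_le_iff_ne_zero.2 hdj
              simp [hd₀, Finsupp.single_apply]
              omega
            · simp [hd₀, Finsupp.single_apply, (Ne.symm hs1), (Ne.symm hs2)]
        set d₂ := d₀ + Finsupp.single (.inl j) 1 + Finsupp.single (.inr i) 1 with hd₂
        have hmono : monomial d (1 : R₀) =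
            (X (.inl i) * X (.inr j) - X (.inl j) * X (.inr i)) * monomial d₀ 1
              + monomial d₂ 1 := by
          rw [sub_mul]
          rw [X, X, X, X, monomial_mul, monomial_mul, monomial_mul, monomial_mul]
          have e1 : Finsupp.single (Sum.inl i : Fin n ⊕ Fin n) 1
              + Finsupp.single (.inr j) 1 + d₀ = d := by
            rw [← hsum]; abel
          have e2 : Finsupp.single (Sum.inl j : Fin n ⊕ Fin n) 1
              + Finsupp.single (.inr i) 1 + d₀ = d₂ := by
            rw [hd₂]; abel
          rw [e1, e2]
          ring_nf
        have hw : wgt n d₂ < wgt n d := by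
          rw [← hsum, hd₂, wgt_add, wgt_add, wgt_add, wgt_add, wgt_single, wgt_single,
            wgt_single, wgt_single]
          simp only [Sum.elim_inl, Sum.elim_inr]
          have : (j : ℕ) < (i : ℕ) := hji
          omega
        have hmem2 : monomial d₂ (1 : R₀) ∈
            NS R₀ n k ⊔ (Ideal.span (gens R₀ n k)).restrictScalars R₀ :=
          ih d₂ (by omega)
        have hmem1 : (X (.inl i) * X (.inr j) - X (.inl j) * X (.inr i)) * monomial d₀ 1 ∈
            (Ideal.span (gens R₀ n k)) := by
          exact Ideal.mul_mem_right _ _ (Ideal.subset_span ⟨i, j, hik, hjk, rfl⟩)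
        rw [hmono]
        exact add_mem (Submodule.mem_sup_right hmem1) hmem2

lemma mem_sup_all (n k : ℕ) (x : MvPolynomial (Fin n ⊕ Fin n) R₀) :
    x ∈ NS R₀ n k ⊔ (Ideal.span (gens R₀ n k)).restrictScalars R₀ := by
  induction x using MvPolynomial.induction_on' with
  | monomial d c =>
      have : monomial d c = c • monomial d (1 : R₀) := by
        rw [smul_monomial, smul_eq_mul, mul_one]
      rw [this]
      exact Submodule.smul_mem _ c (monomial_mem_sup n k (wgt n d + 1) d (by omega))
  | add p q hp hq => exact add_mem hp hq

/-- The submodule of polynomials all of whose monomials are normal. -/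
def suppNormal (R₀ : Type*) [CommRing R₀] (n k : ℕ) :
    Submodule R₀ (MvPolynomial (Fin n ⊕ Fin n) R₀) where
  carrier := {x | ∀ d ∈ x.support, Normal n k d}
  zero_mem' := by simp
  add_mem' := by
    intro a b ha hb d hd
    rcases Finset.mem_union.1 (MvPolynomial.support_add hd) with h | h
    · exact ha d h
    · exact hb d h
  smul_mem' := by
    intro c x hx d hd
    exact hx d (MvPolynomial.support_smul hd)

lemma NS_le_suppNormal (n k : ℕ) : NS R₀ n k ≤ suppNormal R₀ n k := by
  rw [NS, Submodule.span_le]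
  rintro p ⟨d, hd, rfl⟩
  intro d' hd'
  classical
  have := MvPolynomial.support_monomial_subset hd'
  simp only [Finset.mem_singleton] at this
  rwa [this]

lemma phi_injOn (n k : ℕ) (x : MvPolynomial (Fin n ⊕ Fin n) R₀)
    (hx : x ∈ suppNormal R₀ n k) (h0 : aeval (fv R₀ n k) x = 0) : x = 0 := by
  classical
  have hrepr : aeval (fv R₀ n k) x
      = ∑ d ∈ x.support, monomial (Dm n k d) (coeff d x) := by
    conv_lhs => rw [x.as_sum]
    rw [map_sum]
    exact Finset.sum_congr rfl fun d _ => phi_monomial n k d _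
  have hco : ∀ d₀ ∈ x.support, coeff d₀ x = 0 := by
    intro d₀ hd₀
    have h1 : coeff (Dm n k d₀) (aeval (fv R₀ n k) x) = coeff d₀ x := by
      rw [hrepr, MvPolynomial.coeff_sum]
      rw [Finset.sum_eq_single_of_mem d₀ hd₀]
      · rw [coeff_monomial, if_pos rfl]
      · intro d hd hne
        rw [coeff_monomial, if_neg]
        intro hD
        exact hne (Dm_inj d d₀ (hx d hd) (hx d₀ hd₀) hD)
    rw [h0] at h1
    simpa using h1.symm
  ext m
  by_cases hm : m ∈ x.support
  · simpa using hco m hm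
  · simpa using MvPolynomial.notMem_support_iff.1 hm

lemma span_le_ker (n k : ℕ) :
    Ideal.span (gens R₀ n k) ≤
      RingHom.ker (aeval (fv R₀ n k) : MvPolynomial (Fin n ⊕ Fin n) R₀ →ₐ[R₀]
        MvPolynomial (Option (Fin n ⊕ Fin n)) R₀).toRingHom := by
  rw [Ideal.span_le]
  rintro y ⟨i, j, hik, hjk, rfl⟩
  simp only [SetLike.mem_coe, RingHom.mem_ker, AlgHom.toRingHom_eq_coe, RingHom.coe_coe,
    map_sub, map_mul, aeval_X]
  simp only [fv, if_pos hik, if_pos hjk]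
  ring

end Stmt12Aux

open Stmt12Aux in
/-- the key saturation step in the proof of Corollary `c:genericb`:
in `R = R₀[b₁, …, b_n, b′₁, …, b′_n]` (realized as `MvPolynomial (Fin n ⊕ Fin n) R₀`,
with `b_i = X (inl i)` and `b′_i = X (inr i)`), the ideal `J_k` of `2×2` minors
`r_{ij} = b_i b′_j − b_j b′_i` for `i, j ≤ k` is saturated with respect to `b′₁`:
if `(b′₁)^e · x ∈ J_k` then `x ∈ J_k`.  (The paper's indices `1, …, k` correspond to the
indices `i` of `Fin n` with `(i : ℕ) < k`, and `b′₁` to `X (inr ⟨0, _⟩)`.) -/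
theorem stmt12 {R₀ : Type*} [CommRing R₀] (n k : ℕ) (hk : 2 ≤ k) (hkn : k ≤ n)
    (x : MvPolynomial (Fin n ⊕ Fin n) R₀) (e : ℕ)
    (hx : (X (Sum.inr (⟨0, by omega⟩ : Fin n))) ^ e * x ∈
      Ideal.span {y : MvPolynomial (Fin n ⊕ Fin n) R₀ |
        ∃ i j : Fin n, (i : ℕ) < k ∧ (j : ℕ) < k ∧
          y = X (Sum.inl i) * X (Sum.inr j) - X (Sum.inl j) * X (Sum.inr i)}) :
    x ∈ Ideal.span {y : MvPolynomial (Fin n ⊕ Fin n) R₀ |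
      ∃ i j : Fin n, (i : ℕ) < k ∧ (j : ℕ) < k ∧
        y = X (Sum.inl i) * X (Sum.inr j) - X (Sum.inl j) * X (Sum.inr i)} := by
  classical
  have hx' : (X (Sum.inr (⟨0, by omega⟩ : Fin n))) ^ e * x ∈
      Ideal.span (gens R₀ n k) := hx
  show x ∈ Ideal.span (gens R₀ n k)
  obtain ⟨y, hy, z, hz, hyz⟩ :=
    Submodule.mem_sup.1 (mem_sup_all n k x)
  have hzJ : z ∈ Ideal.span (gens R₀ n k) := hz
  -- apply the substitution homomorphism
  have hker := span_le_ker (R₀ := R₀) n k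
  have hφx : aeval (fv R₀ n k) ((X (Sum.inr (⟨0, by omega⟩ : Fin n))) ^ e * x) = 0 :=
    hker hx'
  have hφz : aeval (fv R₀ n k) z = 0 := hker hzJ
  have hφy : (X (some (Sum.inr (⟨0, by omega⟩ : Fin n))) : MvPolynomial _ R₀) ^ e
      * aeval (fv R₀ n k) y = 0 := by
    have hXimg : aeval (fv R₀ n k) (X (Sum.inr (⟨0, by omega⟩ : Fin n)) :
        MvPolynomial (Fin n ⊕ Fin n) R₀)
        = X (some (Sum.inr (⟨0, by omega⟩ : Fin n))) := by
      rw [aeval_X]; rfl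
    have hxy : x = y + z := hyz.symm
    rw [hxy, map_mul, map_pow, hXimg, map_add, hφz, add_zero] at hφx
    exact hφx
  have hφy0 : aeval (fv R₀ n k) y = 0 := by
    have hreg : IsRegular ((X (some (Sum.inr (⟨0, by omega⟩ : Fin n))) :
        MvPolynomial (Option (Fin n ⊕ Fin n)) R₀) ^ e) :=
      MvPolynomial.isRegular_X_pow e
    have hreg := hreg.left
    apply hreg
    simpa using hφy
  have hy0 : y = 0 := phi_injOn n k y (NS_le_suppNormal n k hy) hφy0
  have : x = z := by rw [← hyz, hy0, zero_add]
  rw [this]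
  exact hzJ
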